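/- arXiv:1405.2385 — 4 statements merged into one kernel-verified Lean document; each statement's English description precedes it below -/
import Mathlib

section
/- Let k be an integer with 1 ≤ k ≤ n and let g ∈ Q_k^ppd, acting on the natural module V = F_q^n. Then there exists a positive integer B such that the fixed-point subspace ker(g^B − 1) has dimension n − k, and there exists a g-invariant subspace U of V of dimension k with V = U ⊕ ker(g^B − 1) such that the only subspaces of U invariant under g^B are 0 and U. -/
open Polynomial

/-- `Qk n F k` is the set of elements `g` of `SL_n(q)` (where `q = |F|`) whose characteristic
polynomial factors as `f * h` with `f` irreducible of degree `k` over `F` and with no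
irreducible factor of `h` of degree divisible by `k`. -/
def Qk (n : ℕ) (F : Type) [Field F] [Fintype F] (k : ℕ) :
    Set (Matrix.SpecialLinearGroup (Fin n) F) :=
  {g | ∃ f h : F[X],
    Matrix.charpoly (g : Matrix (Fin n) (Fin n) F) = f * h ∧
    Irreducible f ∧ f.natDegree = k ∧
    ∀ p : F[X], Irreducible p → p ∣ h → ¬ k ∣ p.natDegree}

/-- `IsPPD q m r` says that `r` is a primitive prime divisor of `q ^ m - 1`, that is,
a prime dividing `q ^ m - 1` but not dividing `q ^ i - 1` for any `1 ≤ i < m`. -/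
def IsPPD (q m r : ℕ) : Prop :=
  r.Prime ∧ r ∣ q ^ m - 1 ∧ ∀ i : ℕ, 1 ≤ i → i < m → ¬ r ∣ q ^ i - 1

/-- `QkPPD n F k` is the subset of `Qk n F k` of those elements whose order is divisible by
some primitive prime divisor of `q ^ k - 1` where `q = |F|`. -/
def QkPPD (n : ℕ) (F : Type) [Field F] [Fintype F] (k : ℕ) :
    Set (Matrix.SpecialLinearGroup (Fin n) F) :=
  {g | g ∈ Qk n F k ∧ ∃ r : ℕ, IsPPD (Fintype.card F) k r ∧ r ∣ orderOf g}

/-- `QkFull n F k` is the subset of `QkPPD n F k` of those elements `g` such that for every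
primitive prime divisor `r` of `q ^ k - 1` which divides `|SL_n(q)|`, the order of `g` is
divisible by the largest power of `r` dividing `q ^ k - 1`. -/
def QkFull (n : ℕ) (F : Type) [Field F] [Fintype F] (k : ℕ) :
    Set (Matrix.SpecialLinearGroup (Fin n) F) :=
  {g | g ∈ QkPPD n F k ∧ ∀ r : ℕ, IsPPD (Fintype.card F) k r →
    r ∣ Nat.card (Matrix.SpecialLinearGroup (Fin n) F) →
    r ^ ((Fintype.card F ^ k - 1).factorization r) ∣ orderOf g}

section Aux

variable {F : Type*} [Field F] {V : Type*} [AddCommGroup V] [Module F V]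

lemma coe_aeval_restrict (φ : Module.End F V) {U : Submodule F V}
    (hU : ∀ x ∈ U, φ x ∈ U) (p : F[X]) (x : U) :
    ((Polynomial.aeval (φ.restrict hU) p) x : V) = (Polynomial.aeval φ p) (x : V) := by
  induction p using Polynomial.induction_on' with
  | add p q hp hq => simp [hp, hq]
  | monomial n a =>
    rw [aeval_monomial, aeval_monomial, Module.End.mul_apply, Module.End.mul_apply,
      Module.End.pow_restrict n hU]
    simp [Module.algebraMap_end_apply, LinearMap.restrict_apply]

lemma det_aeval_eq_zero {m : Type*} [Fintype m] [DecidableEq m]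
    (M : Matrix m m F) {p : F[X]} (hdvd : p ∣ M.charpoly) (hdeg : 0 < p.natDegree) :
    ¬ IsUnit (Polynomial.aeval M p) := by
  classical
  intro hunit
  set E := p.SplittingField
  let σ : F →+* E := algebraMap F E
  obtain ⟨α, hα⟩ := (Polynomial.SplittingField.splits p).exists_eval_eq_zero
    (by rw [Polynomial.degree_map]; intro h; rw [Polynomial.degree_eq_natDegree (fun h0 => by simp [h0] at hdeg)] at h;
        exact_mod_cast hdeg.ne' (by exact_mod_cast h))
  have hroot : (p.map σ).IsRoot α := hα
  -- the matrix over E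
  let M' : Matrix m m E := M.map σ
  have hcm : M'.charpoly = M.charpoly.map σ := Matrix.charpoly_map M σ
  have hrootc : (M'.charpoly).IsRoot α := by
    rw [hcm]
    obtain ⟨u, hu⟩ := hdvd
    rw [Polynomial.IsRoot, hu, Polynomial.map_mul, Polynomial.eval_mul, hroot.eq_zero, zero_mul]
  -- det (scalar α - M') = 0
  have hdet0 : (Matrix.scalar m α - M').det = 0 := by
    have : (M'.charpoly).eval α = (Matrix.scalar m α - M').det := by
      rw [Matrix.charpoly, ← Polynomial.coe_evalRingHom, RingHom.map_det]
      congr 1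
      ext i j
      by_cases h : i = j <;>
        simp [Matrix.charmatrix_apply, Matrix.scalar_apply, h, Matrix.diagonal_apply, M']
    rw [← this, hrootc.eq_zero]
  -- transfer the determinant
  have key : ((Polynomial.aeval M p).det : F) = 0 := by
    apply (algebraMap F E).injective
    rw [map_zero, RingHom.map_det]
    have h1 : (σ.mapMatrix) (Polynomial.aeval M p) = Polynomial.aeval M' p :=
      (Polynomial.aeval_algHom_apply (AlgHom.mapMatrix (Algebra.ofId F E)) M p).symm
    rw [h1, ← Polynomial.aeval_map_algebraMap E M' p]
    obtain ⟨u, hu⟩ := Polynomial.dvd_iff_isRoot.mpr hroot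
    rw [hu, map_mul, Matrix.det_mul]
    have h2 : (Polynomial.aeval M' (X - C α)).det = 0 := by
      have h3 : Polynomial.aeval M' (X - C α) = -(Matrix.scalar m α - M') := by
        rw [map_sub, Polynomial.aeval_X, Polynomial.aeval_C, neg_sub]
        congr 1
      rw [h3, Matrix.det_neg, hdet0, mul_zero]
    rw [h2, zero_mul]
  have := (Matrix.isUnit_iff_isUnit_det _).mp hunit
  rw [key] at this
  exact (not_isUnit_zero : ¬ IsUnit (0 : F)) this

variable [FiniteDimensional F V]

lemma ker_aeval_ne_bot (φ : Module.End F V) {p : F[X]}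
    (hdvd : p ∣ φ.charpoly) (hdeg : 0 < p.natDegree) :
    LinearMap.ker (Polynomial.aeval φ p) ≠ ⊥ := by
  classical
  intro hker
  have hunit : IsUnit (Polynomial.aeval φ p) :=
    (LinearMap.isUnit_iff_ker_eq_bot _).mpr hker
  let b := Module.Free.chooseBasis F V
  let e := algEquivMatrix b
  have h1 : Polynomial.aeval (e φ) p = e (Polynomial.aeval φ p) :=
    Polynomial.aeval_algHom_apply e.toAlgHom φ p
  have hunit' : IsUnit (Polynomial.aeval (e φ) p) := by
    rw [h1]; exact hunit.map e
  have hcp : (e φ).charpoly = φ.charpoly := by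
    have : e φ = LinearMap.toMatrix b b φ := rfl
    rw [this, LinearMap.charpoly_toMatrix]
  exact det_aeval_eq_zero (e φ) (hcp ▸ hdvd) hdeg hunit'

lemma charpoly_eq_mul_of_isCompl (φ : Module.End F V) {U W : Submodule F V}
    (hUW : IsCompl U W) (hU : ∀ x ∈ U, φ x ∈ U) (hW : ∀ x ∈ W, φ x ∈ W) :
    φ.charpoly = (φ.restrict hU).charpoly * (φ.restrict hW).charpoly := by
  let ψ := (φ.restrict hU).prodMap (φ.restrict hW)
  let e := Submodule.prodEquivOfIsCompl U W hUW
  let bV := Module.Free.chooseBasis F U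
  let bW := Module.Free.chooseBasis F W
  let b := bV.prod bW
  have hψ : ψ = e.symm.conj φ := by
    apply b.ext
    simp only [Module.Basis.prod_apply, LinearMap.coe_inl, LinearMap.coe_inr, LinearMap.prodMap_apply,
      LinearEquiv.conj_apply, LinearEquiv.symm_symm, Submodule.coe_prodEquivOfIsCompl,
      LinearMap.coe_comp, LinearEquiv.coe_coe, Function.comp_apply, LinearMap.coprod_apply,
      Submodule.coe_subtype, map_add, Sum.forall, Sum.elim_inl, map_zero, ZeroMemClass.coe_zero,
      add_zero, LinearEquiv.eq_symm_apply, and_self, Submodule.coe_prodEquivOfIsCompl',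
      LinearMap.restrict_coe_apply, implies_true, Sum.elim_inr, zero_add, e, ψ, b]
  rw [← e.symm.charpoly_conj φ, ← hψ, LinearMap.charpoly_prodMap]

end Aux

lemma IsPPD.k_dvd {q k r : ℕ} (hq : 1 ≤ q) (hk : 1 ≤ k) (hppd : IsPPD q k r)
    {d : ℕ} (hd : r ∣ q ^ d - 1) : k ∣ d := by
  obtain ⟨hr, hrk, hmin⟩ := hppd
  haveI : Fact r.Prime := ⟨hr⟩
  have cast1 : ∀ i : ℕ, r ∣ q ^ i - 1 ↔ ((q : ZMod r)) ^ i = 1 := by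
    intro i
    have h1 : 1 ≤ q ^ i := Nat.one_le_pow _ _ (by omega)
    rw [← ZMod.natCast_eq_zero_iff]
    rw [Nat.cast_sub h1]
    push_cast
    rw [sub_eq_zero]
  have hqk : ((q : ZMod r)) ^ k = 1 := (cast1 k).mp hrk
  set o := orderOf ((q : ZMod r)) with ho
  have hod : o ∣ k := orderOf_dvd_of_pow_eq_one hqk
  have hopos : 0 < o := by
    apply IsOfFinOrder.orderOf_pos
    exact isOfFinOrder_iff_pow_eq_one.mpr ⟨k, by omega, hqk⟩
  have hok : o = k := by
    by_contra hne
    have holt : o < k := lt_of_le_of_ne (Nat.le_of_dvd (by omega) hod) hne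
    exact hmin o hopos holt ((cast1 o).mpr (pow_orderOf_eq_one _))
  have : o ∣ d := orderOf_dvd_of_pow_eq_one ((cast1 d).mp hd)
  rwa [hok] at this

lemma orderOf_dvd_qpow_sub_one {F : Type*} [Field F] [Fintype F]
    {L : Type*} [Field L] [Algebra F L] [FiniteDimensional F L] (x : L) (hx : x ≠ 0) :
    orderOf x ∣ Fintype.card F ^ Module.finrank F L - 1 := by
  have : Finite L := Module.finite_of_finite F
  cases nonempty_fintype L
  classical
  rw [← Module.card_eq_pow_finrank (K := F) (V := L), ← Fintype.card_units]
  have hxu : IsUnit x := hx.isUnit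
  have h1 : orderOf x = orderOf hxu.unit := by
    rw [← orderOf_units, IsUnit.unit_spec]
  rw [h1]
  exact orderOf_dvd_card

lemma multiset_prod_dvd_pow {α : Type*} [CommMonoid α] (S : Multiset α) (v : α)
    (h : ∀ p ∈ S, p ∣ v) : S.prod ∣ v ^ Multiset.card S := by
  induction S using Multiset.induction_on with
  | empty => simp
  | cons a S ih =>
    rw [Multiset.prod_cons, Multiset.card_cons, pow_succ']
    exact mul_dvd_mul (h a (Multiset.mem_cons_self a S))
      (ih fun p hp => h p (Multiset.mem_cons_of_mem hp))

lemma r_not_dvd_orderOf {F : Type*} [Field F] [Fintype F]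
    {W : Type*} [AddCommGroup W] [Module F W] [FiniteDimensional F W]
    (ψ : Module.End F W) {h : F[X]} (hh : Polynomial.aeval ψ h = 0)
    {k r : ℕ} (hppd : IsPPD (Fintype.card F) k r) (hk1 : 1 ≤ k)
    (hfac : ∀ p : F[X], Irreducible p → p ∣ h → ¬ k ∣ p.natDegree)
    (ht : 0 < orderOf ψ) : ¬ r ∣ orderOf ψ := by
  classical
  intro hrt
  set q := Fintype.card F with hqdef
  have hq1 : 1 ≤ q := Fintype.card_pos
  have hr : r.Prime := hppd.1
  haveI : Fact r.Prime := ⟨hr⟩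
  set t := orderOf ψ with htdef
  obtain ⟨s, hs⟩ := hrt
  have hspos : 0 < s := by
    rcases Nat.eq_zero_or_pos s with h0 | h0
    · rw [h0, mul_zero] at hs; omega
    · exact h0
  set cp := ringChar F with hcp
  haveI : Fact cp.Prime := ⟨CharP.char_is_prime F cp⟩
  set m := minpoly F ψ with hm
  have hint : IsIntegral F ψ := LinearMap.isIntegral ψ
  have hm0 : m ≠ 0 := minpoly.ne_zero hint
  have hmdvd : m ∣ h := minpoly.dvd F ψ hh
  set v : F[X] := X ^ s - 1 with hv
  have hfactor : ∀ p ∈ UniqueFactorizationMonoid.normalizedFactors m, p ∣ v := by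
    intro p hp
    have hpirr : Irreducible p :=
      UniqueFactorizationMonoid.irreducible_of_normalized_factor p hp
    have hpm : p ∣ m := UniqueFactorizationMonoid.dvd_of_mem_normalizedFactors hp
    haveI : Fact (Irreducible p) := ⟨hpirr⟩
    set α := AdjoinRoot.root p with hα
    have hαt : α ^ t = 1 := by
      have h1 : m ∣ X ^ t - 1 := by
        apply minpoly.dvd F ψ
        rw [map_sub, map_pow, aeval_X, map_one, pow_orderOf_eq_one, sub_self]
      have h2 := AdjoinRoot.mk_eq_zero.mpr (hpm.trans h1)
      rwa [map_sub, map_pow, AdjoinRoot.mk_X, map_one, sub_eq_zero] at h2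
    by_cases hone : α ^ s = 1
    · have h3 : AdjoinRoot.mk p (X ^ s - 1) = 0 := by
        rw [map_sub, map_pow, AdjoinRoot.mk_X, map_one, hone, sub_self]
      exact AdjoinRoot.mk_eq_zero.mp h3
    · exfalso
      have hxr : (α ^ s) ^ r = 1 := by
        rw [← pow_mul, mul_comm, ← hs, hαt]
      have hxne : α ^ s ≠ 0 := by
        intro h0
        rw [h0, zero_pow hr.ne_zero] at hxr
        exact zero_ne_one hxr
      have hord : orderOf (α ^ s) = r := orderOf_eq_prime hxr hone
      haveI : Module.Finite F (AdjoinRoot p) := (AdjoinRoot.powerBasis hpirr.ne_zero).finite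
      have hdvd := orderOf_dvd_qpow_sub_one (F := F) (α ^ s) hxne
      rw [hord] at hdvd
      have hfr : Module.finrank F (AdjoinRoot p) = p.natDegree := by
        rw [(AdjoinRoot.powerBasis hpirr.ne_zero).finrank, AdjoinRoot.powerBasis_dim]
      rw [hfr] at hdvd
      exact hfac p hpirr (hpm.trans hmdvd) (hppd.k_dvd hq1 hk1 hdvd)
  have hassoc := UniqueFactorizationMonoid.prod_normalizedFactors hm0
  set N := Multiset.card (UniqueFactorizationMonoid.normalizedFactors m) with hN
  have hmv : m ∣ v ^ N :=
    hassoc.symm.dvd.trans (multiset_prod_dvd_pow _ v hfactor)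
  have hNle : N ≤ cp ^ N := (Nat.lt_pow_self (n := N) (Fact.out (p := cp.Prime)).one_lt).le
  have hveq : v ^ cp ^ N = X ^ (s * cp ^ N) - 1 := by
    rw [hv, sub_pow_char_pow, ← pow_mul, one_pow]
  have hmv2 : m ∣ X ^ (s * cp ^ N) - 1 := by
    rw [← hveq]
    exact hmv.trans (pow_dvd_pow v hNle)
  have hψpow : ψ ^ (s * cp ^ N) = 1 := by
    obtain ⟨w, hw⟩ := hmv2
    have h1 : Polynomial.aeval ψ ((X : F[X]) ^ (s * cp ^ N) - 1) = 0 := by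
      have h0 : Polynomial.aeval ψ m = 0 := minpoly.aeval F ψ
      rw [hw, map_mul, h0, zero_mul]
    rwa [map_sub, map_pow, aeval_X, map_one, sub_eq_zero] at h1
  have hts : t ∣ s * cp ^ N := orderOf_dvd_of_pow_eq_one hψpow
  rw [hs, mul_comm r s] at hts
  have hrdvd : r ∣ cp ^ N := (mul_dvd_mul_iff_left hspos.ne').mp hts
  have hrcp : r = cp := by
    have := hr.dvd_of_dvd_pow hrdvd
    exact (Nat.prime_dvd_prime_iff_eq hr (Fact.out (p := cp.Prime))).mp this
  obtain ⟨nn, -, hnn⟩ := FiniteField.card F cp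
  have hcpq : cp ∣ q := by
    rw [hqdef, hnn]
    exact dvd_pow_self cp (by exact_mod_cast nn.ne_zero)
  have h1 : r ∣ q ^ k := by
    rw [hrcp]
    exact hcpq.trans (dvd_pow_self q (by omega))
  have h2 : r ∣ q ^ k - 1 := hppd.2.1
  have h3 : r ∣ 1 := by
    have := Nat.dvd_sub h1 h2
    rwa [Nat.sub_sub_self (Nat.one_le_pow _ _ (by omega))] at this
  exact hr.one_lt.ne' (Nat.dvd_one.mp h3)

set_option maxHeartbeats 4000000 in
theorem stmt9 (n : ℕ) (F : Type) [Field F] [Fintype F]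
    (k : ℕ) (hk1 : 1 ≤ k) (hkn : k ≤ n)
    (g : Matrix.SpecialLinearGroup (Fin n) F) (hg : g ∈ QkPPD n F k) :
    ∃ B : ℕ, 0 < B ∧
      Module.finrank F (LinearMap.ker
          (Matrix.mulVecLin ((g ^ B : Matrix.SpecialLinearGroup (Fin n) F) :
            Matrix (Fin n) (Fin n) F) - LinearMap.id)) = n - k ∧
      ∃ U : Submodule F (Fin n → F),
        Module.finrank F U = k ∧
        (∀ x ∈ U, Matrix.mulVecLin ((g : Matrix (Fin n) (Fin n) F)) x ∈ U) ∧
        IsCompl U (LinearMap.ker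
          (Matrix.mulVecLin ((g ^ B : Matrix.SpecialLinearGroup (Fin n) F) :
            Matrix (Fin n) (Fin n) F) - LinearMap.id)) ∧
        ∀ W : Submodule F (Fin n → F), W ≤ U →
          (∀ x ∈ W, Matrix.mulVecLin ((g ^ B : Matrix.SpecialLinearGroup (Fin n) F) :
            Matrix (Fin n) (Fin n) F) x ∈ W) →
          W = ⊥ ∨ W = U := by
  classical
  obtain ⟨⟨f0, h0, hch0, hirr0, hdeg0, hfac0⟩, r, hppd, hrord⟩ := hg
  have hq1 : 1 ≤ Fintype.card F := Fintype.card_pos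
  have hr : r.Prime := hppd.1
  haveI : Fact r.Prime := ⟨hr⟩
  -- normalize f
  have hf0ne : f0 ≠ 0 := hirr0.ne_zero
  set c := f0.leadingCoeff with hc
  have hcne : c ≠ 0 := Polynomial.leadingCoeff_ne_zero.mpr hf0ne
  have hCinv : (Polynomial.C c⁻¹ : F[X]) ≠ 0 := by
    rw [Ne, Polynomial.C_eq_zero]
    exact inv_ne_zero hcne
  set f : F[X] := f0 * Polynomial.C c⁻¹ with hfdef
  set h : F[X] := Polynomial.C c * h0 with hhdef
  have hfmonic : f.Monic := Polynomial.monic_mul_leadingCoeff_inv hf0ne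
  have hassocf : Associated f0 f := by
    have hu : IsUnit (Polynomial.C c⁻¹ : F[X]) :=
      Polynomial.isUnit_C.mpr (isUnit_iff_ne_zero.mpr (inv_ne_zero hcne))
    exact ⟨hu.unit, by rw [IsUnit.unit_spec]⟩
  have hirr : Irreducible f := hassocf.irreducible hirr0
  have hdeg : f.natDegree = k := by
    rw [hfdef, Polynomial.natDegree_mul hf0ne hCinv, Polynomial.natDegree_C, add_zero, hdeg0]
  have hfh0 : f * h = f0 * h0 := by
    rw [hfdef, hhdef, mul_assoc, ← mul_assoc (Polynomial.C c⁻¹), ← Polynomial.C_mul,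
      inv_mul_cancel₀ hcne, Polynomial.C_1, one_mul]
  have hfach : ∀ p : F[X], Irreducible p → p ∣ h → ¬ k ∣ p.natDegree := by
    intro p hp hdvd
    apply hfac0 p hp
    have h1 : h0 = Polynomial.C c⁻¹ * h := by
      rw [hhdef, ← mul_assoc, ← Polynomial.C_mul, inv_mul_cancel₀ hcne, Polynomial.C_1, one_mul]
    rw [h1]
    exact hdvd.mul_left _
  -- the endomorphism
  set φ : Module.End F (Fin n → F) :=
    Matrix.mulVecLin ((g : Matrix (Fin n) (Fin n) F)) with hφdef
  have hφpow : ∀ B : ℕ,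
      Matrix.mulVecLin ((g ^ B : Matrix.SpecialLinearGroup (Fin n) F) :
        Matrix (Fin n) (Fin n) F) = φ ^ B := by
    intro B
    induction B with
    | zero =>
      rw [pow_zero, pow_zero, Matrix.SpecialLinearGroup.coe_one, Matrix.mulVecLin_one]
      rfl
    | succ B ih =>
      rw [pow_succ, pow_succ, Matrix.SpecialLinearGroup.coe_mul, Matrix.mulVecLin_mul, ih,
        Module.End.mul_eq_comp, hφdef]
  have hgpow_iff : ∀ B : ℕ, φ ^ B = 1 ↔ g ^ B = 1 := by
    intro B
    constructor
    · intro hB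
      have h2 : Matrix.toLin' ((g ^ B : Matrix.SpecialLinearGroup (Fin n) F) :
          Matrix (Fin n) (Fin n) F) = Matrix.toLin' (1 : Matrix (Fin n) (Fin n) F) := by
        rw [Matrix.toLin'_apply', Matrix.toLin'_apply', hφpow B, hB, Matrix.mulVecLin_one]
        rfl
      have h3 := Matrix.toLin'.injective h2
      apply Subtype.coe_injective
      show ((g ^ B : Matrix.SpecialLinearGroup (Fin n) F) : Matrix (Fin n) (Fin n) F) =
        ((1 : Matrix.SpecialLinearGroup (Fin n) F) : Matrix (Fin n) (Fin n) F)
      rw [Matrix.SpecialLinearGroup.coe_one]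
      exact h3
    · intro hB
      rw [← hφpow B, hB, Matrix.SpecialLinearGroup.coe_one, Matrix.mulVecLin_one]
      rfl
  set T := orderOf g with hT
  have hTpos : 0 < T := orderOf_pos g
  set B := T / r with hB
  have hBr : B * r = T := Nat.div_mul_cancel hrord
  have hBpos : 0 < B := by
    rcases Nat.eq_zero_or_pos B with h0 | h0
    · rw [h0, zero_mul] at hBr; omega
    · exact h0
  have hBltT : B < T := by
    calc B < B * r := lt_mul_of_one_lt_right hBpos hr.one_lt
    _ = T := hBr
  -- the subspaces
  set U : Submodule F (Fin n → F) := LinearMap.ker (Polynomial.aeval φ f) with hU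
  set W : Submodule F (Fin n → F) := LinearMap.ker (Polynomial.aeval φ h) with hW
  have hfh : ¬ f ∣ h := fun hdvd => hfach f hirr hdvd (hdeg ▸ dvd_refl k)
  have hcop : IsCoprime f h := hirr.coprime_iff_not_dvd.mpr hfh
  have hchfh : φ.charpoly = f * h := by
    have hchar : φ.charpoly = Matrix.charpoly ((g : Matrix (Fin n) (Fin n) F)) := by
      rw [← LinearMap.charpoly_toMatrix φ (Pi.basisFun F (Fin n))]
      congr 1
      rw [hφdef, LinearMap.toMatrix_eq_toMatrix', ← Matrix.toLin'_apply']
      exact LinearMap.toMatrix'_toLin' _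
    rw [hchar, hch0, hfh0]
  have haevalfh : Polynomial.aeval φ (f * h) = 0 := by
    rw [← hchfh]
    exact LinearMap.aeval_self_charpoly φ
  have hUW : IsCompl U W := by
    constructor
    · exact Polynomial.disjoint_ker_aeval_of_isCoprime φ hcop
    · rw [codisjoint_iff, hU, hW, Polynomial.sup_ker_aeval_eq_ker_aeval_mul_of_coprime φ hcop,
        haevalfh]
      exact LinearMap.ker_zero
  have hcomm : ∀ p : F[X], Polynomial.aeval φ p * φ = φ * Polynomial.aeval φ p := by
    intro p
    have h1 := map_mul (Polynomial.aeval φ) p X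
    have h2 := map_mul (Polynomial.aeval φ) X p
    rw [Polynomial.aeval_X] at h1 h2
    rw [← h1, ← h2, mul_comm p X]
  have hUinv : ∀ x ∈ U, φ x ∈ U := by
    intro x hx
    rw [hU, LinearMap.mem_ker] at hx ⊢
    rw [← Module.End.mul_apply, hcomm f, Module.End.mul_apply, hx, map_zero]
  have hWinv : ∀ x ∈ W, φ x ∈ W := by
    intro x hx
    rw [hW, LinearMap.mem_ker] at hx ⊢
    rw [← Module.End.mul_apply, hcomm h, Module.End.mul_apply, hx, map_zero]
  set χ := φ.restrict hUinv with hχ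
  set ψ := φ.restrict hWinv with hψ
  have haevalχ : Polynomial.aeval χ f = 0 := by
    apply LinearMap.ext
    intro x
    apply Subtype.ext
    rw [coe_aeval_restrict φ hUinv f x]
    exact x.2
  have haevalψ : Polynomial.aeval ψ h = 0 := by
    apply LinearMap.ext
    intro x
    apply Subtype.ext
    rw [coe_aeval_restrict φ hWinv h x]
    exact x.2
  have hUne : U ≠ ⊥ := by
    apply ker_aeval_ne_bot φ
    · rw [hchfh]; exact dvd_mul_right f h
    · omega
  haveI : Nontrivial (↥U) := Submodule.nontrivial_iff_ne_bot.mpr hUne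
  -- charpoly of the restriction to U is f
  have hprod : φ.charpoly = χ.charpoly * ψ.charpoly := charpoly_eq_mul_of_isCompl φ hUW hUinv hWinv
  have hcharχ : χ.charpoly = f := by
    have hallf : ∀ p ∈ UniqueFactorizationMonoid.normalizedFactors χ.charpoly, p = f := by
      intro p hp
      have hpirr : Irreducible p :=
        UniqueFactorizationMonoid.irreducible_of_normalized_factor p hp
      have hpdvd : p ∣ χ.charpoly := UniqueFactorizationMonoid.dvd_of_mem_normalizedFactors hp
      have hpmonic : p.Monic := by
        have hnp := UniqueFactorizationMonoid.normalize_normalized_factor p hp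
        rw [← hnp]
        exact Polynomial.monic_normalize hpirr.ne_zero
      have hpdegpos : 0 < p.natDegree := hpirr.natDegree_pos
      by_contra hne
      have hnotdvd : ¬ p ∣ f := by
        intro hdvd
        exact hne (Polynomial.eq_of_monic_of_associated hpmonic hfmonic
          (hpirr.associated_of_dvd hirr hdvd))
      have hcop2 : IsCoprime p f := hpirr.coprime_iff_not_dvd.mpr hnotdvd
      obtain ⟨x, hxker, hxne⟩ :=
        (Submodule.ne_bot_iff _).mp (ker_aeval_ne_bot χ hpdvd hpdegpos)
      obtain ⟨a, b, hab⟩ := hcop2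
      apply hxne
      have h5 := congrArg (fun pp : F[X] => Polynomial.aeval χ pp x) hab
      simp only [map_add, map_mul, map_one, LinearMap.add_apply, Module.End.mul_apply,
        Module.End.one_apply] at h5
      rw [LinearMap.mem_ker.mp hxker, map_zero, haevalχ] at h5
      simpa using h5.symm
    have hcharne : χ.charpoly ≠ 0 := χ.charpoly_monic.ne_zero
    have hrepl : UniqueFactorizationMonoid.normalizedFactors χ.charpoly =
        Multiset.replicate (Multiset.card (UniqueFactorizationMonoid.normalizedFactors
          χ.charpoly)) f :=
      (Multiset.eq_replicate_card).mpr hallf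
    have hassocprod := UniqueFactorizationMonoid.prod_normalizedFactors hcharne
    rw [hrepl, Multiset.prod_replicate] at hassocprod
    set N := Multiset.card (UniqueFactorizationMonoid.normalizedFactors χ.charpoly) with hN
    have hfN : f ^ N = χ.charpoly :=
      Polynomial.eq_of_monic_of_associated (hfmonic.pow N) χ.charpoly_monic hassocprod
    have hdegχ : χ.charpoly.natDegree = Module.finrank F (↥U) := χ.charpoly_natDegree
    have hUpos : 0 < Module.finrank F (↥U) := Module.finrank_pos
    have hNpos : 0 < N := by
      by_contra h0
      push_neg at h0
      interval_cases N
      · rw [pow_zero] at hfN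
        rw [← hfN] at hdegχ
        simp at hdegχ
        omega
    have hNone : N = 1 := by
      by_contra hN1
      have hN2 : 2 ≤ N := by omega
      have hf2 : f * f ∣ f * h := by
        calc f * f = f ^ 2 := (sq f).symm
        _ ∣ f ^ N := pow_dvd_pow f hN2
        _ = χ.charpoly := hfN
        _ ∣ χ.charpoly * ψ.charpoly := dvd_mul_right _ _
        _ = f * h := by rw [← hprod, hchfh]
      exact hfh ((mul_dvd_mul_iff_left (hfmonic.ne_zero)).mp hf2)
    rw [← hfN, hNone, pow_one]
  have hfinU : Module.finrank F (↥U) = k := by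
    rw [← χ.charpoly_natDegree, hcharχ, hdeg]
  have hfinV : Module.finrank F (Fin n → F) = n := by
    simp [Module.finrank_pi]
  have hfinW : Module.finrank F (↥W) = n - k := by
    have hsum := Submodule.finrank_add_eq_of_isCompl hUW
    rw [hfinU, hfinV] at hsum
    omega
  -- ψ ^ B = 1
  have hφT : φ ^ T = 1 := (hgpow_iff T).mpr (pow_orderOf_eq_one g)
  have hψT : ψ ^ T = 1 := by
    apply LinearMap.ext
    intro x
    apply Subtype.ext
    rw [hψ, Module.End.pow_restrict, LinearMap.restrict_coe_apply, hφT]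
    rfl
  have hψfin : 0 < orderOf ψ :=
    IsOfFinOrder.orderOf_pos (isOfFinOrder_iff_pow_eq_one.mpr ⟨T, hTpos, hψT⟩)
  have hrψ : ¬ r ∣ orderOf ψ := r_not_dvd_orderOf ψ haevalψ hppd hk1 hfach hψfin
  have hψB : ψ ^ B = 1 := by
    apply orderOf_dvd_iff_pow_eq_one.mp
    have h1 : orderOf ψ ∣ B * r := by
      rw [hBr]
      exact orderOf_dvd_of_pow_eq_one hψT
    exact Nat.Coprime.dvd_of_dvd_mul_right
      ((Nat.coprime_comm).mp (hr.coprime_iff_not_dvd.mpr hrψ)) h1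
  have hφBW : ∀ w ∈ W, (φ ^ B) w = w := by
    intro w hw
    have h1 : ((ψ ^ B) ⟨w, hw⟩ : (Fin n → F)) = w := by rw [hψB]; rfl
    rwa [hψ, Module.End.pow_restrict, LinearMap.restrict_coe_apply] at h1
  -- μ := χ ^ B
  set μ := χ ^ B with hμ
  have hχT : χ ^ T = 1 := by
    apply LinearMap.ext
    intro x
    apply Subtype.ext
    rw [hχ, Module.End.pow_restrict, LinearMap.restrict_coe_apply, hφT]
    rfl
  have hμcoe : ∀ (u : Fin n → F) (hu : u ∈ U), ((μ ⟨u, hu⟩ : ↥U) : Fin n → F) = (φ ^ B) u := by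
    intro u hu
    rw [hμ, hχ, Module.End.pow_restrict, LinearMap.restrict_coe_apply]
  have hμr : μ ^ r = 1 := by
    rw [hμ, ← pow_mul, hBr, hχT]
  have hμne : μ ≠ 1 := by
    intro hone
    have hφB : φ ^ B = 1 := by
      apply LinearMap.ext
      intro v
      have hvmem : v ∈ U ⊔ W := by rw [hUW.sup_eq_top]; trivial
      obtain ⟨u, hu, w, hw, rfl⟩ := Submodule.mem_sup.mp hvmem
      rw [map_add]
      have h1 : (φ ^ B) u = u := by
        rw [← hμcoe u hu, hone]
        rfl
      rw [h1, hφBW w hw, Module.End.one_apply]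
    have h2 : T ∣ B := orderOf_dvd_iff_pow_eq_one.mpr ((hgpow_iff B).mp hφB)
    have := Nat.le_of_dvd hBpos h2
    omega
  have hordμ : orderOf μ = r := orderOf_eq_prime hμr hμne
  -- the field K = AdjoinRoot f
  haveI : Fact (Irreducible f) := ⟨hirr⟩
  haveI : Module.Finite F (AdjoinRoot f) := (AdjoinRoot.powerBasis hfmonic.ne_zero).finite
  have hfinK : Module.finrank F (AdjoinRoot f) = k := by
    rw [(AdjoinRoot.powerBasis hfmonic.ne_zero).finrank, AdjoinRoot.powerBasis_dim, hdeg]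
  haveI : Nontrivial (Module.End F (↥U)) := by
    obtain ⟨x, hx⟩ := exists_ne (0 : ↥U)
    refine ⟨1, 0, fun h01 => hx ?_⟩
    have := congrArg (fun (m : Module.End F (↥U)) => m x) h01
    simpa using this
  have hkerf : ∀ a ∈ Ideal.span ({f} : Set F[X]), (Polynomial.aeval χ).toRingHom a = 0 := by
    intro a ha
    rw [Ideal.mem_span_singleton] at ha
    obtain ⟨b, rfl⟩ := ha
    show Polynomial.aeval χ (f * b) = 0
    rw [map_mul, haevalχ, zero_mul]
  set Θ0 : AdjoinRoot f →+* Module.End F (↥U) :=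
    Ideal.Quotient.lift (Ideal.span ({f} : Set F[X])) (Polynomial.aeval χ).toRingHom hkerf
    with hΘ0
  have hΘ0mk : ∀ a : F[X], Θ0 (AdjoinRoot.mk f a) = Polynomial.aeval χ a := fun a =>
    Ideal.Quotient.lift_mk _ _ _
  set Θ : AdjoinRoot f →ₐ[F] Module.End F (↥U) :=
    { Θ0 with
      commutes' := fun a => by
        show Θ0 (algebraMap F (AdjoinRoot f) a) = algebraMap F (Module.End F (↥U)) a
        have h1 : algebraMap F (AdjoinRoot f) a = AdjoinRoot.mk f (Polynomial.C a) := rfl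
        rw [h1, hΘ0mk, Polynomial.aeval_C] } with hΘ
  have hΘapp : ∀ z : AdjoinRoot f, Θ z = Θ0 z := fun z => rfl
  have hΘinj : Function.Injective Θ := by
    have : Function.Injective Θ0 := Θ0.injective
    intro a b hab
    apply this
    rw [← hΘapp, ← hΘapp, hab]
  set lam := AdjoinRoot.root f with hlam
  have hΘlam : Θ lam = χ := by
    rw [hΘapp, hlam, AdjoinRoot.root, hΘ0mk, Polynomial.aeval_X]
  set β := lam ^ B with hβ
  have hΘβ : Θ β = μ := by rw [hβ, map_pow, hΘlam, hμ]
  have hordΘ : ∀ z : AdjoinRoot f, orderOf (Θ z) = orderOf z := fun z =>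
    orderOf_injective (MonoidHom.mk (OneHom.mk (fun w => Θ w) (map_one Θ)) (map_mul Θ)) hΘinj z
  have hordβ : orderOf β = r := by
    rw [← hordμ, ← hΘβ]
    exact (hordΘ β).symm
  have hβr : β ^ r = 1 := by rw [← hordβ]; exact pow_orderOf_eq_one β
  have hβne1 : β ≠ 1 := by
    intro h1
    rw [h1, orderOf_one] at hordβ
    exact hr.one_lt.ne' hordβ.symm
  have hβne0 : β ≠ 0 := by
    intro h0
    rw [h0, zero_pow hr.ne_zero] at hβr
    exact zero_ne_one hβr
  have hintβ : IsIntegral F β := IsIntegral.of_finite F β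
  set pβ := minpoly F β with hpβ
  have hirrpβ : Irreducible pβ := minpoly.irreducible hintβ
  haveI : Fact (Irreducible pβ) := ⟨hirrpβ⟩
  have hdk : pβ.natDegree ∣ k := by
    rw [← hfinK]
    exact minpoly.degree_dvd hintβ
  haveI : Module.Finite F (AdjoinRoot pβ) := (AdjoinRoot.powerBasis hirrpβ.ne_zero).finite
  have hkd : k ∣ pβ.natDegree := by
    set Θ2 : AdjoinRoot pβ →ₐ[F] AdjoinRoot f :=
      AdjoinRoot.liftAlgHom pβ (Algebra.ofId F (AdjoinRoot f)) β (minpoly.aeval F β) with hΘ2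
    have hΘ2inj : Function.Injective Θ2 := Θ2.toRingHom.injective
    have hΘ2root : Θ2 (AdjoinRoot.root pβ) = β := by
      rw [hΘ2]; exact AdjoinRoot.liftAlgHom_root _ _ _ _
    have hordroot : orderOf (AdjoinRoot.root pβ) = r := by
      rw [← hordβ, ← hΘ2root]
      exact (orderOf_injective
        (MonoidHom.mk (OneHom.mk (fun w => Θ2 w) (map_one Θ2)) (map_mul Θ2)) hΘ2inj
        (AdjoinRoot.root pβ)).symm
    have hrootne0 : AdjoinRoot.root pβ ≠ 0 := by
      intro h0
      apply hβne0
      rw [← hΘ2root, h0, map_zero]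
    have hdvd2 := orderOf_dvd_qpow_sub_one (F := F) (AdjoinRoot.root pβ) hrootne0
    rw [hordroot] at hdvd2
    have hfr2 : Module.finrank F (AdjoinRoot pβ) = pβ.natDegree := by
      rw [(AdjoinRoot.powerBasis hirrpβ.ne_zero).finrank, AdjoinRoot.powerBasis_dim]
    rw [hfr2] at hdvd2
    exact hppd.k_dvd hq1 hk1 hdvd2
  have hdeq : pβ.natDegree = k := Nat.dvd_antisymm hdk hkd
  -- adjoin F {β} = ⊤, so lam is a polynomial in β
  obtain ⟨cpoly, hcpoly⟩ : ∃ cp : F[X], Polynomial.aeval β cp = lam := by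
    have hAtop : Algebra.adjoin F {β} = ⊤ := by
      have hfin2 : Module.finrank F (↥(Algebra.adjoin F {β})) = k := by
        rw [(Algebra.adjoin.powerBasis hintβ).finrank, Algebra.adjoin.powerBasis_dim, ← hpβ, hdeq]
      have h1 : Subalgebra.toSubmodule (Algebra.adjoin F {β}) = ⊤ := by
        apply Submodule.eq_top_of_finrank_eq
        rw [hfinK, (Algebra.adjoin F {β}).finrank_toSubmodule, hfin2]
      rwa [Algebra.toSubmodule_eq_top] at h1
    have h1 : lam ∈ Algebra.adjoin F {β} := hAtop ▸ Algebra.mem_top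
    rw [Algebra.adjoin_singleton_eq_range_aeval] at h1
    exact h1
  have hχμ : Polynomial.aeval μ cpoly = χ := by
    rw [← hΘβ, Polynomial.aeval_algHom_apply Θ β cpoly, hcpoly, hΘlam]
  -- fixed points of μ on U are zero
  have hker_inj : ∀ x : ↥U, μ x = x → x = 0 := by
    intro x hx
    have hβ1 : β - 1 ≠ 0 := sub_ne_zero.mpr hβne1
    have h2 : Θ (β - 1) x = 0 := by
      rw [map_sub, map_one, hΘβ, LinearMap.sub_apply, Module.End.one_apply, hx, sub_self]
    have h4 : Θ ((β - 1)⁻¹) * Θ (β - 1) = 1 := by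
      rw [← map_mul, inv_mul_cancel₀ hβ1, map_one]
    calc x = (Θ ((β - 1)⁻¹) * Θ (β - 1)) x := by rw [h4]; rfl
    _ = Θ ((β - 1)⁻¹) (Θ (β - 1) x) := rfl
    _ = 0 := by rw [h2, map_zero]
  -- ker (φ ^ B - id) = W
  have hkerD : LinearMap.ker
      (Matrix.mulVecLin ((g ^ B : Matrix.SpecialLinearGroup (Fin n) F) :
        Matrix (Fin n) (Fin n) F) - LinearMap.id) = W := by
    rw [hφpow B]
    apply le_antisymm
    · intro v hv
      rw [LinearMap.mem_ker, LinearMap.sub_apply, LinearMap.id_apply, sub_eq_zero] at hv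
      have hvmem : v ∈ U ⊔ W := by rw [hUW.sup_eq_top]; trivial
      obtain ⟨u, hu, w, hw, rfl⟩ := Submodule.mem_sup.mp hvmem
      have h1 : (φ ^ B) w = w := hφBW w hw
      have h2 : (φ ^ B) u = u := by
        rw [map_add, h1] at hv
        exact add_right_cancel hv
      have h3 : μ (⟨u, hu⟩ : ↥U) = ⟨u, hu⟩ := by
        apply Subtype.ext
        rw [hμcoe u hu]
        exact h2
      have h4 := hker_inj _ h3
      have h5 : u = 0 := congrArg Subtype.val h4
      rw [h5, zero_add]
      exact hw
    · intro w hw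
      rw [LinearMap.mem_ker, LinearMap.sub_apply, LinearMap.id_apply, hφBW w hw, sub_self]
  refine ⟨B, hBpos, by rw [hkerD]; exact hfinW, U, hfinU, fun x hx => hUinv x hx,
    by rw [hkerD]; exact hUW, ?_⟩
  -- irreducibility of the action on U
  intro W' hle hinv
  by_cases hbot : W' = ⊥
  · left; exact hbot
  right
  obtain ⟨x, hxW', hxne⟩ := (Submodule.ne_bot_iff _).mp hbot
  have hxU : x ∈ U := hle hxW'
  rw [hφpow B] at hinv
  have hstep : ∀ y : ↥U, (y : Fin n → F) ∈ W' → ((μ y : ↥U) : Fin n → F) ∈ W' := by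
    intro y hy
    have h1 : ((μ y : ↥U) : Fin n → F) = (φ ^ B) (y : Fin n → F) := by
      obtain ⟨yv, hyv⟩ := y
      exact hμcoe yv hyv
    rw [h1]
    exact hinv _ hy
  have hpow : ∀ (j : ℕ) (y : ↥U), (y : Fin n → F) ∈ W' →
      (((μ ^ j) y : ↥U) : Fin n → F) ∈ W' := by
    intro j
    induction j with
    | zero => intro y hy; simpa using hy
    | succ j ih =>
      intro y hy
      rw [pow_succ, Module.End.mul_apply]
      exact ih (μ y) (hstep y hy)
  have hpoly : ∀ c' : F[X], ((Polynomial.aeval μ c' ⟨x, hxU⟩ : ↥U) : Fin n → F) ∈ W' := by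
    intro c'
    induction c' using Polynomial.induction_on' with
    | add p q hp hq =>
      rw [map_add, LinearMap.add_apply, Submodule.coe_add]
      exact W'.add_mem hp hq
    | monomial j a =>
      rw [aeval_monomial, Module.End.mul_apply, Module.algebraMap_end_apply, SetLike.val_smul]
      exact W'.smul_mem a (hpow j ⟨x, hxU⟩ hxW')
  have hχpow : ∀ i : ℕ, (φ ^ i) x ∈ W' := by
    intro i
    have h1 : ((χ ^ i) ⟨x, hxU⟩ : Fin n → F) = (φ ^ i) x := by
      rw [hχ, Module.End.pow_restrict, LinearMap.restrict_coe_apply]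
    rw [← h1]
    have h2 : χ ^ i = Polynomial.aeval μ (cpoly ^ i) := by rw [map_pow, hχμ]
    rw [h2]
    exact hpoly (cpoly ^ i)
  have hli : LinearIndependent F (fun i : Fin k => (φ ^ (i : ℕ)) x) := by
    rw [Fintype.linearIndependent_iff]
    intro a ha
    set P : F[X] := ∑ i : Fin k, Polynomial.C (a i) * X ^ (i : ℕ) with hP
    have haP : Polynomial.aeval φ P x = 0 := by
      rw [hP]
      rw [map_sum, LinearMap.sum_apply]
      have : ∀ i : Fin k,
          Polynomial.aeval φ (Polynomial.C (a i) * X ^ (i : ℕ)) x = a i • (φ ^ (i : ℕ)) x := by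
        intro i
        rw [map_mul, Polynomial.aeval_C, map_pow, Polynomial.aeval_X, Module.End.mul_apply,
          Module.algebraMap_end_apply]
      rw [Finset.sum_congr rfl (fun i _ => this i)]
      exact ha
    have hP0 : P = 0 := by
      by_contra hPne
      have hdegP : P.natDegree < k := by
        have h1 : P.natDegree ≤ k - 1 := by
          apply Polynomial.natDegree_sum_le_of_forall_le
          intro i _
          apply le_trans (Polynomial.natDegree_C_mul_le _ _)
          rw [Polynomial.natDegree_X_pow]
          omega
        omega
      have hfndvd : ¬ f ∣ P := by
        intro hdvd
        have := Polynomial.natDegree_le_of_dvd hdvd hPne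
        omega
      have hcop2 : IsCoprime f P := hirr.coprime_iff_not_dvd.mpr hfndvd
      obtain ⟨a', b', hab'⟩ := hcop2
      apply hxne
      have h5 := congrArg (fun pp : F[X] => Polynomial.aeval φ pp x) hab'
      simp only [map_add, map_mul, map_one, LinearMap.add_apply, Module.End.mul_apply,
        Module.End.one_apply] at h5
      rw [haP, map_zero, LinearMap.mem_ker.mp hxU, map_zero] at h5
      simpa using h5.symm
    intro i
    have hco := congrArg (fun pp : F[X] => pp.coeff (i : ℕ)) hP0
    simp only [hP, Polynomial.finset_sum_coeff, Polynomial.coeff_C_mul,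
      Polynomial.coeff_X_pow, Polynomial.coeff_zero, mul_ite, mul_one, mul_zero,
      Fin.val_eq_val] at hco
    rw [Finset.sum_ite_eq Finset.univ i (fun j => a j)] at hco
    simpa using hco
  have hspan : k ≤ Module.finrank F (↥W') := by
    have h1 : Submodule.span F (Set.range fun i : Fin k => (φ ^ (i : ℕ)) x) ≤ W' := by
      rw [Submodule.span_le]
      rintro _ ⟨i, rfl⟩
      exact hχpow i
    calc k = Fintype.card (Fin k) := (Fintype.card_fin k).symm
    _ = Module.finrank F (Submodule.span F (Set.range fun i : Fin k => (φ ^ (i : ℕ)) x)) :=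
        (finrank_span_eq_card hli).symm
    _ ≤ Module.finrank F (↥W') := Submodule.finrank_mono h1
  exact Submodule.eq_of_le_of_finrank_le hle (by omega)
end

section
/- Let m and n be integers with 2 ≤ m ≤ n. Let A be the set of permutations of an n-element set whose multiset of cycle lengths (including fixed points as cycles of length 1) contains m exactly once and has every other entry not divisible by m, and let B be the set of permutations of an (n−m)-element set with no cycle of length divisible by m. Then m · (n−m)! · |A| = n! · |B|; equivalently, |A|/n! = (1/m) · |B|/(n−m)!. -/
/-- The multiset of cycle lengths of a permutation, including fixed points as
cycles of length `1`. -/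
def fullCycleType {α : Type} [Fintype α] [DecidableEq α] (σ : Equiv.Perm α) : Multiset ℕ :=
  σ.cycleType + Multiset.replicate (Fintype.card α - σ.support.card) 1

/-- The set of permutations of an `n`-element set whose multiset of cycle lengths
(including fixed points as cycles of length `1`) contains `m` exactly once and has
every other entry not divisible by `m`. -/
def bmSet (n m : ℕ) : Set (Equiv.Perm (Fin n)) :=
  {σ | (fullCycleType σ).count m = 1 ∧ ∀ l ∈ (fullCycleType σ).erase m, ¬ m ∣ l}

namespace Stmt12Aux

open Equiv Equiv.Perm List Finset

variable {n m : ℕ}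

def GoodList (n m : ℕ) : Type := {l : List (Fin n) // l.Nodup ∧ l.length = m}

section

variable (hm : 2 ≤ m) (hmn : m ≤ n)

lemma two_le_length (l : GoodList n m) (hm : 2 ≤ m) : 2 ≤ l.1.length := by rw [l.2.2]; exact hm

lemma ne_singleton (l : GoodList n m) (hm : 2 ≤ m) : ∀ x : Fin n, l.1 ≠ [x] := by
  intro x h
  have := l.2.2
  rw [h] at this
  simp at this
  omega

lemma ne_nil (l : GoodList n m) (hm : 2 ≤ m) : l.1 ≠ [] := by
  intro h
  have := l.2.2
  rw [h] at this
  simp at this; omega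

lemma card_toFinset (l : GoodList n m) : l.1.toFinset.card = m := by
  rw [List.toFinset_card_of_nodup l.2.1, l.2.2]

lemma isCycle_formPerm' (l : GoodList n m) (hm : 2 ≤ m) : l.1.formPerm.IsCycle :=
  List.isCycle_formPerm l.2.1 (two_le_length l hm)

lemma support_formPerm' (l : GoodList n m) (hm : 2 ≤ m) :
    l.1.formPerm.support = l.1.toFinset :=
  List.support_formPerm_of_nodup l.1 l.2.1 (ne_singleton l hm)

/-- the complement of the list, as a finset -/
def compl (l : GoodList n m) : Finset (Fin n) := l.1.toFinsetᶜ

lemma card_compl (l : GoodList n m) : (compl l).card = n - m := by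
  rw [compl, Finset.card_compl, card_toFinset l]
  simp

/-- order equiv of `Fin (n-m)` with the complement -/
noncomputable def cEquiv (l : GoodList n m) : Fin (n - m) ≃ {x : Fin n // x ∈ compl l} :=
  ((compl l).orderIsoOfFin (card_compl l)).toEquiv

noncomputable def Phi (l : GoodList n m) (τ : Equiv.Perm (Fin (n - m))) : Equiv.Perm (Fin n) :=
  l.1.formPerm * τ.extendDomain (cEquiv l)

lemma support_ext_subset (l : GoodList n m) (τ : Equiv.Perm (Fin (n - m))) :
    (τ.extendDomain (cEquiv l)).support ⊆ compl l := by
  rw [Equiv.Perm.support_extend_domain]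
  intro x hx
  simp only [Finset.mem_map] at hx
  obtain ⟨a, _, rfl⟩ := hx
  exact ((cEquiv l) a).2

lemma disj (l : GoodList n m) (hm : 2 ≤ m) (τ : Equiv.Perm (Fin (n - m))) :
    Equiv.Perm.Disjoint l.1.formPerm (τ.extendDomain (cEquiv l)) := by
  rw [Equiv.Perm.disjoint_iff_disjoint_support, support_formPerm' l hm]
  exact Disjoint.mono_right (Finset.le_iff_subset.mpr (support_ext_subset l τ))
    disjoint_compl_right

lemma fullCycleType_Phi (l : GoodList n m) (hm : 2 ≤ m) (hmn : m ≤ n)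
    (τ : Equiv.Perm (Fin (n - m))) :
    fullCycleType (Phi l τ) = m ::ₘ fullCycleType τ := by
  have hd := disj l hm τ
  have hct : (Phi l τ).cycleType = {m} + τ.cycleType := by
    rw [Phi, Equiv.Perm.Disjoint.cycleType_mul hd, (isCycle_formPerm' l hm).cycleType, support_formPerm' l hm,
      card_toFinset l, Equiv.Perm.cycleType_extendDomain]
  have hsupp : (Phi l τ).support.card = m + τ.support.card := by
    rw [Phi, hd.support_mul, Finset.card_union_of_disjoint
      (Equiv.Perm.disjoint_iff_disjoint_support.mp hd), support_formPerm' l hm,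
      card_toFinset l, Equiv.Perm.card_support_extend_domain]
  rw [fullCycleType, fullCycleType, hct, hsupp]
  have h1 : Fintype.card (Fin n) - (m + τ.support.card)
      = Fintype.card (Fin (n - m)) - τ.support.card := by
    simp only [Fintype.card_fin]
    omega
  rw [h1]
  rw [Multiset.singleton_add, Multiset.cons_add]

lemma mem_bmSet_phi (l : GoodList n m) (hm : 2 ≤ m) (hmn : m ≤ n)
    (τ : Equiv.Perm (Fin (n - m))) :
    Phi l τ ∈ bmSet n m ↔ ∀ k ∈ fullCycleType τ, ¬ m ∣ k := by
  simp only [bmSet, Set.mem_setOf_eq, fullCycleType_Phi l hm hmn τ,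
    Multiset.count_cons_self, Multiset.erase_cons_head]
  constructor
  · rintro ⟨_, h2⟩; exact h2
  · intro h
    refine ⟨?_, h⟩
    have h0 : Multiset.count m (fullCycleType τ) = 0 := by
      rw [Multiset.count_eq_zero]
      intro hmem
      exact h m hmem dvd_rfl
    omega

lemma count_fullCycleType (σ : Equiv.Perm (Fin n)) (hm : 2 ≤ m) :
    (fullCycleType σ).count m = σ.cycleType.count m := by
  have h1 : m ≠ 1 := by omega
  rw [fullCycleType, Multiset.count_add, Multiset.count_replicate, if_neg (fun h => h1 h.symm), add_zero]

lemma count_eq_card_filter (σ : Equiv.Perm (Fin n)) :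
    σ.cycleType.count m
      = (σ.cycleFactorsFinset.filter (fun c => c.support.card = m)).card := by
  rw [Equiv.Perm.cycleType_def, Multiset.count_map]
  rw [show (Finset.filter (fun c => c.support.card = m) σ.cycleFactorsFinset).card
      = Multiset.card
          (Multiset.filter (fun c => c.support.card = m) σ.cycleFactorsFinset.val) from rfl]
  congr 1
  apply Multiset.filter_congr
  intro c _
  simp [eq_comm, Function.comp]

noncomputable def theCycle (m : ℕ) (σ : Equiv.Perm (Fin n)) : Equiv.Perm (Fin n) :=
  if h : ∃ c, σ.cycleFactorsFinset.filter (fun c => c.support.card = m) = {c} then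
    h.choose else 1

lemma filter_eq_theCycle {σ : Equiv.Perm (Fin n)} (hσ : σ ∈ bmSet n m) (hm : 2 ≤ m) :
    σ.cycleFactorsFinset.filter (fun c => c.support.card = m) = {theCycle m σ} := by
  have h1 : (σ.cycleFactorsFinset.filter (fun c => c.support.card = m)).card = 1 := by
    rw [← count_eq_card_filter, ← count_fullCycleType σ hm]
    exact hσ.1
  have h : ∃ c, σ.cycleFactorsFinset.filter (fun c => c.support.card = m) = {c} :=
    Finset.card_eq_one.mp h1
  rw [theCycle, dif_pos h]
  exact h.choose_spec

lemma theCycle_mem {σ : Equiv.Perm (Fin n)} (hσ : σ ∈ bmSet n m) (hm : 2 ≤ m) :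
    theCycle m σ ∈ σ.cycleFactorsFinset ∧ (theCycle m σ).support.card = m := by
  have h := filter_eq_theCycle hσ hm
  have h2 : theCycle m σ ∈ σ.cycleFactorsFinset.filter (fun c => c.support.card = m) := by
    rw [h]; exact Finset.mem_singleton_self _
  exact Finset.mem_filter.mp h2

lemma theCycle_unique {σ c : Equiv.Perm (Fin n)} (hσ : σ ∈ bmSet n m) (hm : 2 ≤ m)
    (h1 : c ∈ σ.cycleFactorsFinset) (h2 : c.support.card = m) : c = theCycle m σ := by
  have h := filter_eq_theCycle hσ hm
  have : c ∈ σ.cycleFactorsFinset.filter (fun c => c.support.card = m) :=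
    Finset.mem_filter.mpr ⟨h1, h2⟩
  rw [h, Finset.mem_singleton] at this
  exact this

lemma mem_iff_of_support_subset {σ' : Equiv.Perm (Fin n)} {s : Finset (Fin n)}
    (hs : σ'.support ⊆ s) (x : Fin n) : x ∈ s ↔ σ' x ∈ s := by
  by_cases h : σ' x = x
  · rw [h]
  · constructor <;> intro _
    · exact hs (by rwa [Equiv.Perm.apply_mem_support, Equiv.Perm.mem_support])
    · exact hs (Equiv.Perm.mem_support.mpr h)

lemma extendDomain_subtypePerm (l : GoodList n m) {σ' : Equiv.Perm (Fin n)}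
    (hs : σ'.support ⊆ compl l) :
    Equiv.Perm.extendDomain
      ((cEquiv l).symm.permCongr
        (σ'.subtypePerm (fun x => (mem_iff_of_support_subset hs x).symm))) (cEquiv l) = σ' := by
  ext x
  by_cases hx : x ∈ compl l
  · rw [Equiv.Perm.extendDomain_apply_subtype _ _ hx]
    simp
  · rw [Equiv.Perm.extendDomain_apply_not_subtype _ _ hx]
    exact congrArg Fin.val (Equiv.Perm.notMem_support.mp (fun h => hx (hs h))).symm

lemma theCycle_phi (l : GoodList n m) (hm : 2 ≤ m) (hmn : m ≤ n)
    (τ : Equiv.Perm (Fin (n - m))) (hb : Phi l τ ∈ bmSet n m) :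
    theCycle m (Phi l τ) = l.1.formPerm := by
  symm
  apply theCycle_unique hb hm
  · rw [Equiv.Perm.mem_cycleFactorsFinset_iff]
    refine ⟨isCycle_formPerm' l hm, fun a ha => ?_⟩
    rw [support_formPerm' l hm] at ha
    have hfix : τ.extendDomain (cEquiv l) a = a := by
      apply Equiv.Perm.notMem_support.mp
      intro hmem
      exact (Finset.mem_compl.mp (support_ext_subset l τ hmem)) ha
    rw [Phi, Equiv.Perm.mul_apply, hfix]
  · rw [support_formPerm' l hm, card_toFinset l]

section Rec

variable {σ : Equiv.Perm (Fin n)} {x : Fin n}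

lemma cycleOf_eq_theCycle (hσ : σ ∈ bmSet n m) (hm : 2 ≤ m) (hx : x ∈ (theCycle m σ).support) : σ.cycleOf x = theCycle m σ :=
  (Equiv.Perm.cycle_is_cycleOf hx (theCycle_mem hσ hm).1).symm

def recList (hσ : σ ∈ bmSet n m) (hm : 2 ≤ m) (hx : x ∈ (theCycle m σ).support) : GoodList n m :=
  ⟨σ.toList x, Equiv.Perm.nodup_toList σ x, by
    rw [Equiv.Perm.length_toList, cycleOf_eq_theCycle hσ hm hx, (theCycle_mem hσ hm).2]⟩

lemma formPerm_recList (hσ : σ ∈ bmSet n m) (hm : 2 ≤ m) (hx : x ∈ (theCycle m σ).support) : (recList hσ hm hx).1.formPerm = theCycle m σ := by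
  show (σ.toList x).formPerm = _
  rw [Equiv.Perm.formPerm_toList, cycleOf_eq_theCycle hσ hm hx]

lemma toFinset_recList (hσ : σ ∈ bmSet n m) (hm : 2 ≤ m) (hx : x ∈ (theCycle m σ).support) : (recList hσ hm hx).1.toFinset = (theCycle m σ).support := by
  rw [← support_formPerm' _ hm, formPerm_recList hσ hm hx]

lemma support_sub (hσ : σ ∈ bmSet n m) (hm : 2 ≤ m) (hx : x ∈ (theCycle m σ).support) : (σ * (theCycle m σ)⁻¹).support ⊆ compl (recList hσ hm hx) := by
  intro a ha
  rw [compl, Finset.mem_compl, toFinset_recList hσ hm hx]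
  have hd := Equiv.Perm.disjoint_mul_inv_of_mem_cycleFactorsFinset (theCycle_mem hσ hm).1
  rw [Equiv.Perm.disjoint_iff_disjoint_support] at hd
  exact Finset.disjoint_left.mp hd ha

noncomputable def recPerm (hσ : σ ∈ bmSet n m) (hm : 2 ≤ m) (hx : x ∈ (theCycle m σ).support) : Equiv.Perm (Fin (n - m)) :=
  (cEquiv (recList hσ hm hx)).symm.permCongr
    ((σ * (theCycle m σ)⁻¹).subtypePerm
      (fun a => (mem_iff_of_support_subset (support_sub hσ hm hx) a).symm))

lemma extendDomain_recPerm (hσ : σ ∈ bmSet n m) (hm : 2 ≤ m) (hx : x ∈ (theCycle m σ).support) :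
    (recPerm hσ hm hx).extendDomain (cEquiv (recList hσ hm hx))
      = σ * (theCycle m σ)⁻¹ :=
  extendDomain_subtypePerm _ (support_sub hσ hm hx)

lemma mul_inv_comm (hσ : σ ∈ bmSet n m) (hm : 2 ≤ m) :
    theCycle m σ * (σ * (theCycle m σ)⁻¹) = σ := by
  have hcomm :=
    (Equiv.Perm.disjoint_mul_inv_of_mem_cycleFactorsFinset (theCycle_mem hσ hm).1).commute
  rw [← hcomm.eq]
  group

lemma phi_rec (hσ : σ ∈ bmSet n m) (hm : 2 ≤ m) (hx : x ∈ (theCycle m σ).support) : Phi (recList hσ hm hx) (recPerm hσ hm hx) = σ := by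
  rw [Phi, extendDomain_recPerm hσ hm hx, formPerm_recList hσ hm hx]
  exact mul_inv_comm hσ hm

lemma fct_rec (hσ : σ ∈ bmSet n m) (hm : 2 ≤ m) (hx : x ∈ (theCycle m σ).support) (hmn : m ≤ n) :
    fullCycleType σ = m ::ₘ fullCycleType (recPerm hσ hm hx) := by
  conv_lhs => rw [← phi_rec hσ hm hx]
  exact fullCycleType_Phi _ hm hmn _

lemma recPerm_mem (hσ : σ ∈ bmSet n m) (hm : 2 ≤ m) (hx : x ∈ (theCycle m σ).support) (hmn : m ≤ n) : ∀ k ∈ fullCycleType (recPerm hσ hm hx), ¬ m ∣ k := by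
  intro k hk
  apply hσ.2 k
  rw [fct_rec hσ hm hx hmn, Multiset.erase_cons_head]
  exact hk

lemma toList_eq_toList_theCycle (hσ : σ ∈ bmSet n m) (hm : 2 ≤ m) (hx : x ∈ (theCycle m σ).support) : σ.toList x = (theCycle m σ).toList x := by
  have hc := cycleOf_eq_theCycle hσ hm hx
  have hcyc : (theCycle m σ).IsCycle :=
    (Equiv.Perm.mem_cycleFactorsFinset_iff.mp (theCycle_mem hσ hm).1).1
  have hc2 : (theCycle m σ).cycleOf x = theCycle m σ :=
    hcyc.cycleOf_eq (by
      have := hx; rwa [Equiv.Perm.mem_support] at this)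
  rw [Equiv.Perm.toList, Equiv.Perm.toList, hc, hc2]
  apply List.ext_getElem (by simp)
  intro k _ _
  rw [List.getElem_iterate, List.getElem_iterate, ← Equiv.Perm.coe_pow, ← Equiv.Perm.coe_pow,
    ← Equiv.Perm.cycleOf_pow_apply_self σ x k, hc,
    ← Equiv.Perm.cycleOf_pow_apply_self (theCycle m σ) x k, hc2]

end Rec

abbrev BType (n m : ℕ) : Type := {σ : Equiv.Perm (Fin (n - m)) // ∀ l ∈ fullCycleType σ, ¬ m ∣ l}

lemma phi_injective (l l' : GoodList n m) (hll : l = l') (τ τ' : Equiv.Perm (Fin (n - m)))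
    (h : Phi l τ = Phi l' τ') : τ = τ' := by
  subst hll
  have h2 : τ.extendDomain (cEquiv l) = τ'.extendDomain (cEquiv l) := mul_left_cancel h
  exact Equiv.Perm.extendDomainHom_injective (cEquiv l) h2

noncomputable def fiberEquiv (hm : 2 ≤ m) (hmn : m ≤ n) (σ : Equiv.Perm (Fin n))
    (hσ : σ ∈ bmSet n m) :
    {p : GoodList n m × BType n m // Phi p.1 p.2.1 = σ}
      ≃ {x : Fin n // x ∈ (theCycle m σ).support} where
  toFun p := ⟨p.1.1.1.head (ne_nil p.1.1 hm), by
    obtain ⟨⟨l, τ⟩, h⟩ := p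
    have hb : Phi l τ.1 ∈ bmSet n m := by rw [h]; exact hσ
    have hcf : theCycle m σ = l.1.formPerm := by rw [← h]; exact theCycle_phi l hm hmn τ.1 hb
    rw [hcf, support_formPerm' l hm, List.mem_toFinset]
    exact List.head_mem _⟩
  invFun y :=
    ⟨⟨recList hσ hm y.2, ⟨recPerm hσ hm y.2, recPerm_mem hσ hm y.2 hmn⟩⟩, phi_rec hσ hm y.2⟩
  left_inv := by
    rintro ⟨⟨l, τ⟩, h⟩
    have hb : Phi l τ.1 ∈ bmSet n m := by rw [h]; exact hσ
    have hcf : theCycle m σ = l.1.formPerm := by rw [← h]; exact theCycle_phi l hm hmn τ.1 hb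
    have hne := ne_nil l hm
    have hx' : l.1.head hne ∈ (theCycle m σ).support := by
      rw [hcf, support_formPerm' l hm, List.mem_toFinset]
      exact List.head_mem hne
    have hl : recList hσ hm hx' = l := by
      apply Subtype.ext
      show σ.toList _ = l.1
      rw [toList_eq_toList_theCycle hσ hm hx', hcf]
      have h0 : l.1.head hne = l.1.get ⟨0, zero_lt_two.trans_le (two_le_length l hm)⟩ := by
        rw [List.head_eq_getElem_zero]
        rfl
      rw [h0]
      exact Equiv.Perm.toList_formPerm_nontrivial l.1 (two_le_length l hm) l.2.1
    have hτ : τ.1 = recPerm hσ hm hx' := by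
      apply phi_injective l (recList hσ hm hx') hl.symm
      rw [h, phi_rec hσ hm hx']
    apply Subtype.ext
    refine Prod.ext ?_ ?_
    · exact hl
    · exact Subtype.ext hτ.symm
  right_inv := by
    rintro ⟨x, hx⟩
    apply Subtype.ext
    have hxσ : x ∈ σ.support :=
      Equiv.Perm.mem_cycleFactorsFinset_support_le (theCycle_mem hσ hm).1 hx
    show (σ.toList x).head _ = x
    refine (List.head_eq_getElem_zero _).trans ?_
    have h0 := Equiv.Perm.toList_getElem_zero σ x hxσ
    simpa using h0

/-- equivalence with embeddings, to compute the cardinality -/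
def listEquivEmb : GoodList n m ≃ (Fin m ↪ Fin n) where
  toFun l := ⟨fun i => l.1.get (Fin.cast l.2.2.symm i), fun i j h => by
    have := (List.nodup_iff_injective_get.mp l.2.1) h
    simpa [Fin.ext_iff] using this⟩
  invFun e := ⟨List.ofFn e, List.nodup_ofFn.mpr e.injective, List.length_ofFn⟩
  left_inv l := by
    apply Subtype.ext
    apply List.ext_get (by simp [l.2.2])
    intro i h1 h2
    simp
    rfl
  right_inv e := by
    ext i
    simp

noncomputable instance : Fintype (GoodList n m) := Fintype.ofEquiv _ listEquivEmb.symm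

lemma card_goodList (n m : ℕ) : Nat.card (GoodList n m) = n.descFactorial m := by
  classical
  rw [Nat.card_eq_fintype_card, Fintype.card_congr listEquivEmb]
  simp [Fintype.card_embedding_eq]

lemma key_count (hm : 2 ≤ m) (hmn : m ≤ n) :
    Nat.card (GoodList n m × BType n m) = m * Nat.card (bmSet n m) := by
  classical
  haveI : Fintype (BType n m) := Fintype.ofFinite _
  haveI : Fintype (↥(bmSet n m)) := Fintype.ofFinite _
  let g : GoodList n m × BType n m → ↥(bmSet n m) :=
    fun p => ⟨Phi p.1 p.2.1, (mem_bmSet_phi p.1 hm hmn p.2.1).mpr p.2.2⟩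
  rw [Nat.card_eq_fintype_card, Nat.card_eq_fintype_card,
    Fintype.card_congr (Equiv.sigmaFiberEquiv g).symm, Fintype.card_sigma]
  have hfib : ∀ σ : ↥(bmSet n m), Fintype.card {p // g p = σ} = m := by
    intro σ
    have e2 : {p // g p = σ} ≃ {p : GoodList n m × BType n m // Phi p.1 p.2.1 = σ.1} :=
      Equiv.subtypeEquivRight (fun p => Subtype.ext_iff)
    rw [Fintype.card_congr (e2.trans (fiberEquiv hm hmn σ.1 σ.2))]
    rw [Fintype.card_coe]
    exact (theCycle_mem σ.2 hm).2
  rw [Finset.sum_congr rfl (fun σ _ => hfib σ), Finset.sum_const, smul_eq_mul,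
    Finset.card_univ, mul_comm]

lemma main_nat (hm : 2 ≤ m) (hmn : m ≤ n) :
    m * (n - m).factorial * Nat.card (bmSet n m) =
      n.factorial *
        Nat.card {σ : Equiv.Perm (Fin (n - m)) | ∀ l ∈ fullCycleType σ, ¬ m ∣ l} := by
  have h1 := key_count hm hmn (n := n) (m := m)
  have h2 : Nat.card (GoodList n m × BType n m)
      = n.descFactorial m * Nat.card (BType n m) := by
    rw [Nat.card_prod, card_goodList]
  have h3 : Nat.card (BType n m)
      = Nat.card {σ : Equiv.Perm (Fin (n - m)) | ∀ l ∈ fullCycleType σ, ¬ m ∣ l} := rfl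
  calc m * (n - m).factorial * Nat.card (bmSet n m)
      = (n - m).factorial * (m * Nat.card (bmSet n m)) := by ring
    _ = (n - m).factorial * (n.descFactorial m * Nat.card (BType n m)) := by rw [← h1, h2]
    _ = ((n - m).factorial * n.descFactorial m) * Nat.card (BType n m) := by ring
    _ = n.factorial * Nat.card {σ : Equiv.Perm (Fin (n - m)) | ∀ l ∈ fullCycleType σ, ¬ m ∣ l} := by
        rw [Nat.factorial_mul_descFactorial hmn, h3]

end

end Stmt12Aux

theorem stmt12 (n m : ℕ) (hm : 2 ≤ m) (hmn : m ≤ n) :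
    m * (n - m).factorial * Nat.card (bmSet n m) =
        n.factorial *
          Nat.card {σ : Equiv.Perm (Fin (n - m)) | ∀ l ∈ fullCycleType σ, ¬ m ∣ l} ∧
      (Nat.card (bmSet n m) : ℝ) / (n.factorial : ℝ) =
        (1 / (m : ℝ)) *
          (Nat.card {σ : Equiv.Perm (Fin (n - m)) | ∀ l ∈ fullCycleType σ, ¬ m ∣ l} : ℝ) /
            ((n - m).factorial : ℝ) := by
  have hkey := Stmt12Aux.main_nat hm hmn
  refine ⟨hkey, ?_⟩
  have hm0 : (m : ℝ) ≠ 0 := Nat.cast_ne_zero.mpr (by omega)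
  have hf1 : ((n.factorial : ℕ) : ℝ) ≠ 0 := Nat.cast_ne_zero.mpr n.factorial_ne_zero
  have hf2 : (((n - m).factorial : ℕ) : ℝ) ≠ 0 := Nat.cast_ne_zero.mpr (n - m).factorial_ne_zero
  have hc : (m : ℝ) * ((n - m).factorial : ℝ) * (Nat.card (bmSet n m) : ℝ)
      = (n.factorial : ℝ) *
        (Nat.card {σ : Equiv.Perm (Fin (n - m)) | ∀ l ∈ fullCycleType σ, ¬ m ∣ l} : ℝ) := by
    exact_mod_cast hkey
  field_simp
  have hsame : Nat.card {σ : Equiv.Perm (Fin (n - m)) // ∀ l ∈ fullCycleType σ, ¬ m ∣ l}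
      = Nat.card ↥{σ : Equiv.Perm (Fin (n - m)) | ∀ l ∈ fullCycleType σ, ¬ m ∣ l} := rfl
  linear_combination hc
end

section
/- Let T be a finite abelian group and r a prime such that T contains an element whose order is divisible by r. Then the number of elements of T whose order is divisible by r is at least (1 − 1/r)·|T|. -/
theorem stmt15 (T : Type) [CommGroup T] [Fintype T] (r : ℕ) (hr : r.Prime)
    (h : ∃ t : T, r ∣ orderOf t) :
    (1 - 1 / (r : ℝ)) * (Fintype.card T : ℝ) ≤
      (Nat.card {t : T | r ∣ orderOf t} : ℝ) := by
  classical
  -- the subgroup of elements whose order is not divisible by r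
  set H : Subgroup T :=
    { carrier := {t : T | ¬ r ∣ orderOf t}
      one_mem' := by simp [Nat.dvd_one, hr.ne_one]
      mul_mem' := by
        intro a b ha hb hd
        have hlcm := (Commute.all a b).orderOf_mul_dvd_lcm
        have : r ∣ Nat.lcm (orderOf a) (orderOf b) := hd.trans hlcm
        have : r ∣ orderOf a * orderOf b :=
          this.trans (Nat.lcm_dvd_mul _ _)
        rcases hr.dvd_mul.mp this with h' | h'
        · exact ha h'
        · exact hb h'
      inv_mem' := by intro a ha; simpa [orderOf_inv] using ha } with hHdef
  have hrT : r ∣ Fintype.card T := by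
    obtain ⟨t, ht⟩ := h
    exact ht.trans (orderOf_dvd_card)
  haveI := Fact.mk hr
  have hrH : ¬ r ∣ Nat.card H := by
    intro hd
    obtain ⟨g, hg⟩ := exists_prime_orderOf_dvd_card r
      (by simpa [Nat.card_eq_fintype_card] using hd)
    have hcoe : orderOf (g : T) = orderOf g := Subgroup.orderOf_coe g
    exact g.2 (by rw [hcoe, hg])
  have hmul : Nat.card H * H.index = Nat.card T := Subgroup.card_mul_index H
  have hrI : r ∣ H.index := by
    have : r ∣ Nat.card H * H.index := by
      rw [hmul, Nat.card_eq_fintype_card]; exact hrT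
    rcases hr.dvd_mul.mp this with h' | h'
    · exact absurd h' hrH
    · exact h'
  have hIpos : 0 < H.index := Nat.pos_of_ne_zero H.index_ne_zero_of_finite
  have hle : r * Nat.card H ≤ Fintype.card T := by
    calc r * Nat.card H ≤ H.index * Nat.card H :=
          Nat.mul_le_mul_right _ (Nat.le_of_dvd hIpos hrI)
      _ = Fintype.card T := by rw [mul_comm, hmul, Nat.card_eq_fintype_card]
  -- count the complement
  have hcompl : ({t : T | r ∣ orderOf t} : Set T)ᶜ = (H : Set T) := by
    ext t; simp [hHdef]
  have hcard : Nat.card {t : T | r ∣ orderOf t}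
      = Fintype.card T - Nat.card H := by
    have h1 : ({t : T | r ∣ orderOf t} : Set T).ncard
        + (({t : T | r ∣ orderOf t} : Set T)ᶜ).ncard = Nat.card T :=
      Set.ncard_add_ncard_compl _
    rw [hcompl] at h1
    have h2 : ((H : Set T)).ncard = Nat.card H := by
      rw [← Nat.card_coe_set_eq, SetLike.coe_sort_coe]
    have h3 : ({t : T | r ∣ orderOf t} : Set T).ncard
        = Nat.card {t : T | r ∣ orderOf t} := (Nat.card_coe_set_eq _).symm
    rw [h2, h3] at h1
    simp only [Nat.card_eq_fintype_card] at h1 ⊢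
    omega
  rw [hcard]
  have hHle : Nat.card H ≤ Fintype.card T := by
    nlinarith [hr.two_le, Nat.card_pos (α := H)]
  rw [Nat.cast_sub hHle]
  have hr0 : (0:ℝ) < r := by exact_mod_cast hr.pos
  have hle' : (r : ℝ) * (Nat.card H : ℝ) ≤ (Fintype.card T : ℝ) := by
    exact_mod_cast hle
  rw [sub_mul, one_mul, sub_le_sub_iff_left, div_mul_eq_mul_div, one_mul,
    le_div_iff₀ hr0]
  nlinarith
end

section
/- Let F be a finite field and let f be a monic irreducible polynomial over F of degree at least 2 such that for every root a of f in an algebraic closure of F, the element a^{-1} is also a root of f. Then the degree of f is even. -/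
open Polynomial

theorem stmt16 (F : Type) [Field F] [Fintype F] (f : Polynomial F)
    (hmonic : f.Monic) (hirr : Irreducible f) (hdeg : 2 ≤ f.natDegree)
    (hsc : ∀ a : AlgebraicClosure F, Polynomial.aeval a f = 0 →
      Polynomial.aeval a⁻¹ f = 0) :
    Even f.natDegree := by
  set n := f.natDegree with hn
  have hf0 : f ≠ 0 := hmonic.ne_zero
  -- f has no root in F
  have hnoroot : ∀ x : F, ¬ f.IsRoot x := by
    intro x hx
    obtain ⟨g, hg⟩ := (Polynomial.dvd_iff_isRoot).2 hx
    rcases hirr.isUnit_or_isUnit hg with h | h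
    · exact Polynomial.not_isUnit_X_sub_C x h
    · have hg0 : g ≠ 0 := by rintro rfl; simp at hg; exact hf0 hg
      have : n = 1 := by
        rw [hn, hg, Polynomial.natDegree_mul (Polynomial.X_sub_C_ne_zero x) hg0,
          Polynomial.natDegree_X_sub_C, Polynomial.natDegree_eq_zero_of_isUnit h]
      omega
  have hc0 : f.coeff 0 ≠ 0 := by
    intro h
    exact hnoroot 0 (by rwa [Polynomial.IsRoot, ← Polynomial.coeff_zero_eq_eval_zero])
  -- a root in the algebraic closure
  obtain ⟨a, ha⟩ := IsAlgClosed.exists_aeval_eq_zero (AlgebraicClosure F) f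
    (by rw [Polynomial.degree_eq_natDegree hf0]; exact_mod_cast by omega)
  have ha0 : a ≠ 0 := by
    rintro rfl
    rw [show Polynomial.aeval (0 : AlgebraicClosure F) f =
      algebraMap F (AlgebraicClosure F) (f.coeff 0) by
        rw [Polynomial.aeval_def, Polynomial.eval₂_at_zero]] at ha
    exact hc0 ((_root_.map_eq_zero _).1 ha)
  have hainv : Polynomial.aeval a⁻¹ f = 0 := hsc a ha
  -- f divides reverse f
  have hmin : f = minpoly F a := minpoly.eq_of_irreducible_of_monic hirr ha hmonic
  have hrevroot : Polynomial.aeval a (f.reverse) = 0 := by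
    letI : Invertible (a⁻¹) := ⟨a, by field_simp, by field_simp⟩
    have := (Polynomial.eval₂_reverse_eq_zero_iff (algebraMap F (AlgebraicClosure F))
      (a⁻¹) f).2 (by rwa [Polynomial.aeval_def] at hainv)
    rw [show (⅟(a⁻¹) : AlgebraicClosure F) = a from rfl] at this
    rwa [Polynomial.aeval_def]
  have hdvd : f ∣ f.reverse := by
    rw [hmin]; exact minpoly.dvd F a (by rwa [← hmin])
  have hrevdeg : f.reverse.natDegree = n := by
    rw [Polynomial.reverse_natDegree, Polynomial.natTrailingDegree_eq_zero.2 (Or.inr hc0),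
      Nat.sub_zero]
  have hrevne : f.reverse ≠ 0 := by
    intro h; exact hf0 (Polynomial.reverse_eq_zero.mp h)
  obtain ⟨g, hg⟩ := hdvd
  have hg0 : g ≠ 0 := by rintro rfl; simp at hg; exact hf0 hg
  have hgdeg : g.natDegree = 0 := by
    have := hrevdeg
    rw [hg, Polynomial.natDegree_mul hf0 hg0] at this
    omega
  obtain ⟨c, rfl⟩ := Polynomial.natDegree_eq_zero.1 hgdeg
  -- evaluate at 1 : c = 1
  have hS : f.eval 1 ≠ 0 := hnoroot 1
  have hrev1 : f.reverse.eval 1 = f.eval 1 := by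
    letI : Invertible (1 : F) := invertibleOne
    have := Polynomial.eval₂_reverse_mul_pow (RingHom.id F) (1 : F) f
    simpa [Polynomial.eval₂_eq_eval_map] using this
  have hc1 : c = 1 := by
    have : f.eval 1 * 1 = f.eval 1 * c := by
      rw [mul_one]
      conv_lhs => rw [← hrev1, hg]
      rw [Polynomial.eval_mul, Polynomial.eval_C]
    exact (mul_left_cancel₀ hS this).symm
  rw [hc1] at hg
  simp only [map_one, mul_one] at hg
  -- now f.reverse = f
  by_contra hodd
  rw [Nat.not_even_iff_odd] at hodd
  by_cases h2 : (2 : F) = 0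
  · -- char 2 : eval 1 f = 0 by pairing
    have hpal : ∀ i ≤ n, f.coeff (n - i) = f.coeff i := by
      intro i hi
      conv_rhs => rw [← hg]
      rw [Polynomial.coeff_reverse, Polynomial.revAt_le hi]
    have : f.eval 1 = 0 := by
      rw [Polynomial.eval_eq_sum_range]
      simp only [one_pow, mul_one]
      refine Finset.sum_involution (fun i _ => n - i) ?_ ?_ ?_ ?_
      · intro i hi
        rw [Finset.mem_range] at hi
        rw [hpal i (by omega), ← two_mul, h2, zero_mul]
      · intro i hi hne
        rw [Finset.mem_range] at hi
        intro h
        have h' : n - i = i := h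
        obtain ⟨m, hm⟩ := hodd
        omega
      · intro i hi
        have hi' := Finset.mem_range.1 hi
        show n - i ∈ Finset.range (f.natDegree + 1)
        exact Finset.mem_range.2 (by omega)
      · intro i hi
        have hi' := Finset.mem_range.1 hi
        show n - (n - i) = i
        omega
    exact hS this
  · -- char ≠ 2 : eval (-1) f = 0
    have hT : f.eval (-1) ≠ 0 := hnoroot (-1)
    letI : Invertible (-1 : F) := ⟨-1, by ring, by ring⟩
    have := Polynomial.eval₂_reverse_mul_pow (RingHom.id F) (-1 : F) f
    rw [show (⅟(-1 : F)) = -1 from rfl, hg] at this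
    simp only [Polynomial.eval₂_eq_eval_map, Polynomial.map_id] at this
    rw [hodd.neg_one_pow] at this
    have : (2 : F) * f.eval (-1) = 0 := by linear_combination -this
    rcases mul_eq_zero.1 this with h | h
    · exact h2 h
    · exact hT h
end
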